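/- Let σ=(Σ_i)_{i∈[k]} be a trace alphabet, κ_ω the capacity function with κ_ω(i) = ω for all i ∈ [k], and A, B nondeterministic Büchi automata over Σ. If there exists a continuous, trace-preserving function f : ARun(A) → ARun(B), then A ⊑^{κ_ω}_σ B. -/

import Mathlib

open Classical

noncomputable section

namespace MultiBuffer

/-! ### Nondeterministic Büchi automata -/

/-- A nondeterministic Büchi automaton over the alphabet `α`. -/
structure NBA (α : Type) : Type 1 where
  Q : Type
  finQ : Fintype Q
  init : Q
  δ : Q → α → Set Q
  F : Set Q

variable {α P Q : Type} {k : ℕ}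

/-- `r` is (the state sequence of) a run of `A` on the infinite word `w`. -/
def IsRun (A : NBA α) (w : ℕ → α) (r : ℕ → A.Q) : Prop :=
  r 0 = A.init ∧ ∀ n, r (n + 1) ∈ A.δ (r n) (w n)

/-- The state sequence `r` visits accepting states infinitely often. -/
def AcceptingStates (A : NBA α) (r : ℕ → A.Q) : Prop :=
  {n | r n ∈ A.F}.Infinite

/-- The ω-language of a Büchi automaton. -/
def Lang (A : NBA α) : Set (ℕ → α) :=
  {w | ∃ r, IsRun A w r ∧ AcceptingStates A r}

/-! ### Finite or infinite words, projections and trace equivalence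

A finite or infinite word over `α` is represented as a function `ℕ → Option α`
which is `none` from some point on (if finite); infinite words embed via `ofInf`. -/

/-- The infinite word `u` viewed as an element of `Σ^∞`. -/
def ofInf (u : ℕ → α) : ℕ → Option α := fun n => some (u n)

/-- A function `ℕ → Option α` represents a finite or infinite word if after the
first `none` everything is `none`. -/
def Stable (w : ℕ → Option α) : Prop := ∀ n, w n = none → w (n + 1) = none

/-- The number of `i < j` satisfying `p`. -/
def countBelow (p : ℕ → Prop) (j : ℕ) : ℕ := {i | i < j ∧ p i}.ncard

/-- Position `j` of the word `w` carries a letter belonging to `S`. -/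
def InS (S : Set α) (w : ℕ → Option α) (j : ℕ) : Prop := ∃ a ∈ S, w j = some a

/-- The projection `π_S(w)` of the word `w` to the subalphabet `S`: the word obtained
from `w` by deleting all letters not in `S`. -/
def proj (S : Set α) (w : ℕ → Option α) (n : ℕ) : Option α :=
  if h : ∃ j, InS S w j ∧ countBelow (InS S w) j = n then w h.choose else none

/-- Trace equivalence of (finite or infinite) words w.r.t. the trace alphabet
`σ = (Σ_i)_{i ∈ [k]}` : all projections coincide. -/
def TraceEquiv (σ : Fin k → Set α) (u v : ℕ → Option α) : Prop :=
  ∀ i, proj (σ i) u = proj (σ i) v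

/-- The trace closure of a language of infinite words. -/
def closure (σ : Fin k → Set α) (L : Set (ℕ → α)) : Set (ℕ → α) :=
  {v | ∃ u ∈ L, TraceEquiv σ (ofInf u) (ofInf v)}

/-! ### The multi-buffer game -/

/-- A configuration of the multi-buffer game: a state of Spoiler's automaton,
the contents of the `k` buffers, and a state of Duplicator's automaton. -/
structure Conf (α P Q : Type) (k : ℕ) where
  p : P
  bufs : Fin k → List α
  q : Q

/-- Appending the letter `a` to the back of every buffer `i` with `a ∈ σ i`. -/
def push (σ : Fin k → Set α) (bufs : Fin k → List α) (a : α) : Fin k → List α :=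
  fun i => if a ∈ σ i then bufs i ++ [a] else bufs i

/-- Popping the letter `b` from the front of every buffer `i` with `b ∈ σ i`. -/
def pop (σ : Fin k → Set α) (bufs : Fin k → List α) (b : α) : Fin k → List α :=
  fun i => if b ∈ σ i then (bufs i).tail else bufs i

/-- Effect of a Spoiler move `m = (a, p')` on a configuration. -/
def spApply (σ : Fin k → Set α) (c : Conf α P Q k) (m : α × P) : Conf α P Q k :=
  ⟨m.2, push σ c.bufs m.1, c.q⟩

/-- Effect of a (possibly empty) Duplicator move `d = (b₁,q₁)...(b_n,q_n)`. -/
def dupApply (σ : Fin k → Set α) (c : Conf α P Q k) (d : List (α × Q)) : Conf α P Q k :=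
  ⟨c.p, d.foldl (fun bs m => pop σ bs m.1) c.bufs, ((d.getLast?).map Prod.snd).getD c.q⟩

/-- Legality of a Spoiler move: it follows a transition of his automaton. -/
def SpLegal (δA : P → α → Set P) (c : Conf α P Q k) (m : α × P) : Prop :=
  m.2 ∈ δA c.p m.1

/-- Legality of a Duplicator move from a configuration: the moves form a run of her
automaton and each letter is removed from the front of the corresponding buffers. -/
def DupLegal (σ : Fin k → Set α) (δB : Q → α → Set Q) :
    Conf α P Q k → List (α × Q) → Prop
  | _, [] => True
  | c, m :: rest =>
      m.2 ∈ δB c.q m.1 ∧ (∀ i, m.1 ∈ σ i → (c.bufs i).head? = some m.1) ∧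
      DupLegal σ δB ⟨c.p, pop σ c.bufs m.1, m.2⟩ rest

/-- The capacity constraints (checked after a full round). -/
def CapOk (κ : Fin k → ℕ∞) (c : Conf α P Q k) : Prop :=
  ∀ i, ((c.bufs i).length : ℕ∞) ≤ κ i

/-- The list of the first `n` values of the sequence `s`. -/
def hist {β : Type} (s : ℕ → β) (n : ℕ) : List β := List.ofFn (fun i : Fin n => s i)

/-- The configuration of the play after `n` full rounds, when Spoiler plays the
sequence `s` of moves and Duplicator follows the strategy `θ` (which maps the
history of Spoiler moves, including the current one, to her response). -/
def playConf (σ : Fin k → Set α) (θ : List (α × P) → List (α × Q))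
    (c0 : Conf α P Q k) (s : ℕ → α × P) : ℕ → Conf α P Q k
  | 0 => c0
  | n + 1 => dupApply σ (spApply σ (playConf σ θ c0 s n) (s n)) (θ (hist s (n + 1)))

/-- Duplicator's response in round `n`. -/
def resp (θ : List (α × P) → List (α × Q)) (s : ℕ → α × P) (n : ℕ) : List (α × Q) :=
  θ (hist s (n + 1))

/-- Spoiler's move in round `n` is legal. -/
def SpLegalAt (σ : Fin k → Set α) (δA : P → α → Set P) (θ : List (α × P) → List (α × Q))
    (c0 : Conf α P Q k) (s : ℕ → α × P) (n : ℕ) : Prop :=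
  SpLegal δA (playConf σ θ c0 s n) (s n)

/-- Duplicator's response in round `n` is legal and the capacities are respected
after the round. -/
def DupOkAt (σ : Fin k → Set α) (κ : Fin k → ℕ∞) (δB : Q → α → Set Q)
    (θ : List (α × P) → List (α × Q)) (c0 : Conf α P Q k) (s : ℕ → α × P) (n : ℕ) : Prop :=
  DupLegal σ δB (spApply σ (playConf σ θ c0 s n) (s n)) (resp θ s n) ∧
  CapOk κ (playConf σ θ c0 s (n + 1))

/-- The number of occurrences of the letter `a` in Spoiler's word. -/
def spOcc (s : ℕ → α × P) (a : α) : ℕ∞ := {n | (s n).1 = a}.encard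

/-- The number of occurrences of the letter `a` in Duplicator's word. -/
def dupOcc (θ : List (α × P) → List (α × Q)) (s : ℕ → α × P) (a : α) : ℕ∞ :=
  {x : ℕ × ℕ | ∃ m, (resp θ s x.1)[x.2]? = some m ∧ m.1 = a}.encard

/-- Spoiler's run is accepting. -/
def SpAccept (FA : Set P) (s : ℕ → α × P) : Prop := {n | (s n).2 ∈ FA}.Infinite

/-- Duplicator's run is (infinite and) accepting. -/
def DupAccept (FB : Set Q) (θ : List (α × P) → List (α × Q)) (s : ℕ → α × P) : Prop :=
  {n | ∃ m ∈ resp θ s n, m.2 ∈ FB}.Infinite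

/-- Duplicator has a winning strategy in the multi-buffer game (with buffer alphabets
`σ`, capacities `κ`) played on the transition structures `δA`, `δB` with acceptance
sets `FA`, `FB`, starting from the configuration `c0`: she always has legal responses
(as long as Spoiler has played legally), and if the resulting infinite play carries an
accepting run of Spoiler then her own run is infinite and accepting and every letter
occurs equally often in both words (i.e. every letter put into a buffer is eventually
read). Finite plays in which a player is stuck are lost by that player. -/
def DupWinsFrom (σ : Fin k → Set α) (κ : Fin k → ℕ∞) (δA : P → α → Set P)
    (δB : Q → α → Set Q) (FA : Set P) (FB : Set Q) (c0 : Conf α P Q k) : Prop :=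
  ∃ θ : List (α × P) → List (α × Q),
    ∀ s : ℕ → α × P,
      (∀ n, (∀ m ≤ n, SpLegalAt σ δA θ c0 s m) → DupOkAt σ κ δB θ c0 s n) ∧
      ((∀ n, SpLegalAt σ δA θ c0 s n) → SpAccept FA s →
        DupAccept FB θ s ∧ ∀ a : α, spOcc s a = dupOcc θ s a)

/-- The multi-buffer simulation `A ⊑^κ_σ B`. -/
def Simu (σ : Fin k → Set α) (κ : Fin k → ℕ∞) (A B : NBA α) : Prop :=
  DupWinsFrom σ κ A.δ B.δ A.F B.F ⟨A.init, fun _ => [], B.init⟩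


/-! ### Accepting runs, the metric on runs, continuity and trace preservation -/

variable {α : Type}

/-- The set of accepting runs of an NBA, as a type: a run `q₀ a₀ q₁ a₁ ⋯` is given
by its state sequence and its word, and it must start in the initial state, follow
the transition function, and visit `F` infinitely often. -/
def ARun (A : NBA α) : Type :=
  {x : (ℕ → A.Q) × (ℕ → α) //
    x.1 0 = A.init ∧ (∀ n, x.1 (n + 1) ∈ A.δ (x.1 n) (x.2 n)) ∧ {n | x.1 n ∈ A.F}.Infinite}

/-- An accepting run viewed as the infinite sequence `q₀ a₀ q₁ a₁ ⋯ ∈ (Q ∪ Σ)^ω`. -/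
def seqOf {A : NBA α} (ρ : ARun A) : ℕ → A.Q ⊕ α :=
  fun n => if n % 2 = 0 then Sum.inl (ρ.val.1 (n / 2)) else Sum.inr (ρ.val.2 (n / 2))

/-- Continuity of `f : ARun A → ARun B` with respect to the metric
`d(x,y) = inf {2^{-i} ∣ x_j = y_j for all j < i}` on the sequences in `(Q ∪ Σ)^ω`:
for every run `ρ` and every required output precision `2^{-n}` there is an input
precision `2^{-m}` such that runs `2^{-m}`-close to `ρ` are mapped to runs
`2^{-n}`-close to `f ρ`. -/
def ContinuousRF {A B : NBA α} (f : ARun A → ARun B) : Prop :=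
  ∀ (ρ : ARun A) (n : ℕ), ∃ m : ℕ, ∀ ρ' : ARun A,
    (∀ j < m, seqOf ρ' j = seqOf ρ j) → ∀ j < n, seqOf (f ρ') j = seqOf (f ρ) j

/-- `f : ARun A → ARun B` is trace-preserving: the word of `f ρ` is trace
equivalent to the word of `ρ`. -/
def TracePres {k : ℕ} (σ : Fin k → Set α) {A B : NBA α} (f : ARun A → ARun B) : Prop :=
  ∀ ρ : ARun A, TraceEquiv σ (ofInf ρ.val.2) (ofInf (f ρ).val.2)

/-- The capacity function making all `k` buffers unbounded. -/
def kapAllOmega (k : ℕ) : Fin k → ℕ∞ := fun _ => ⊤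


/-! ### Auxiliary development -/

section AuxDev
variable {α : Type}

/-! Part A : counting and projection lemmas -/

def pref (w : ℕ → α) (n : ℕ) : List α := (List.range n).map w

def dP (S : Set α) : α → Bool := fun b => decide (b ∈ S)

lemma dP_iff {S : Set α} {b : α} : dP S b = true ↔ b ∈ S := by
  simp [dP]

lemma pref_succ (w : ℕ → α) (n : ℕ) : pref w (n + 1) = pref w n ++ [w n] := by
  simp [pref, List.range_succ]

@[simp] lemma pref_zero (w : ℕ → α) : pref w 0 = [] := rfl

@[simp] lemma length_pref (w : ℕ → α) (n : ℕ) : (pref w n).length = n := by simp [pref]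

lemma pref_prefix (w : ℕ → α) {m n : ℕ} (h : m ≤ n) : pref w m <+: pref w n := by
  obtain ⟨t, rfl⟩ := Nat.exists_eq_add_of_le h
  clear h
  induction t with
  | zero => exact List.prefix_refl _
  | succ t ih =>
      rw [show m + (t + 1) = (m + t) + 1 from rfl, pref_succ]
      exact ih.trans (List.prefix_append _ _)

lemma countBelow_eq_card (p : ℕ → Prop) (j : ℕ) :
    countBelow p j = ((Finset.range j).filter p).card := by
  rw [countBelow, ← Set.ncard_coe_finset]
  congr 1
  ext i
  simp [and_comm]

lemma countBelow_congr {p q : ℕ → Prop} (h : ∀ i, p i ↔ q i) (j : ℕ) :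
    countBelow p j = countBelow q j := by
  unfold countBelow
  congr 1
  ext i
  simp [h i]

lemma countBelow_succ (p : ℕ → Prop) (j : ℕ) :
    countBelow p (j + 1) = countBelow p j + if p j then 1 else 0 := by
  rw [countBelow_eq_card, countBelow_eq_card, Finset.range_add_one, Finset.filter_insert]
  by_cases h : p j
  · rw [if_pos h, if_pos h, Finset.card_insert_of_notMem (by simp)]
  · rw [if_neg h, if_neg h, add_zero]

lemma countBelow_mono (p : ℕ → Prop) {j j' : ℕ} (h : j ≤ j') :
    countBelow p j ≤ countBelow p j' := by
  rw [countBelow_eq_card, countBelow_eq_card]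
  exact Finset.card_le_card (Finset.filter_subset_filter _ (by simpa using h))

lemma countBelow_strict (p : ℕ → Prop) {j j' : ℕ} (h : j < j') (hp : p j) :
    countBelow p j < countBelow p j' := by
  have : countBelow p j + 1 ≤ countBelow p (j + 1) := by
    rw [countBelow_succ, if_pos hp]
  exact lt_of_lt_of_le (Nat.lt_of_lt_of_le (Nat.lt_succ_self _) this) (countBelow_mono p h)

lemma countBelow_uniq (p : ℕ → Prop) {j j' : ℕ} (hj : p j) (hj' : p j')
    (h : countBelow p j = countBelow p j') : j = j' := by
  rcases lt_trichotomy j j' with hlt | heq | hgt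
  · exact absurd h (Nat.ne_of_lt (countBelow_strict p hlt hj))
  · exact heq
  · exact absurd h.symm (Nat.ne_of_lt (countBelow_strict p hgt hj'))

lemma inS_ofInf (S : Set α) (w : ℕ → α) (j : ℕ) : InS S (ofInf w) j ↔ w j ∈ S := by
  constructor
  · rintro ⟨a, ha, h⟩
    have : w j = a := by simpa [ofInf] using h
    rwa [this]
  · intro h
    exact ⟨w j, h, rfl⟩

lemma proj_ofInf_eq_some (S : Set α) (w : ℕ → α) {j n : ℕ}
    (hj : w j ∈ S) (hc : countBelow (fun i => w i ∈ S) j = n) :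
    proj S (ofInf w) n = some (w j) := by
  have hEx : ∃ j', InS S (ofInf w) j' ∧ countBelow (InS S (ofInf w)) j' = n :=
    ⟨j, (inS_ofInf S w j).2 hj, by rw [countBelow_congr (inS_ofInf S w)]; exact hc⟩
  rw [proj, dif_pos hEx]
  obtain ⟨h1, h2⟩ := hEx.choose_spec
  have hji : hEx.choose = j := by
    apply countBelow_uniq (InS S (ofInf w)) h1 ((inS_ofInf S w j).2 hj)
    rw [h2, countBelow_congr (inS_ofInf S w)]; exact hc.symm
  rw [hji]; rfl

lemma proj_ofInf_some_ex (S : Set α) (w : ℕ → α) {n : ℕ} {a : α}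
    (h : proj S (ofInf w) n = some a) :
    ∃ j, w j ∈ S ∧ countBelow (fun i => w i ∈ S) j = n ∧ w j = a := by
  rw [proj] at h
  by_cases hEx : ∃ j', InS S (ofInf w) j' ∧ countBelow (InS S (ofInf w)) j' = n
  · rw [dif_pos hEx] at h
    obtain ⟨h1, h2⟩ := hEx.choose_spec
    refine ⟨hEx.choose, (inS_ofInf S w _).1 h1, ?_, ?_⟩
    · rw [← countBelow_congr (inS_ofInf S w)]; exact h2
    · simpa [ofInf] using h
  · rw [dif_neg hEx] at h; exact absurd h (by simp)

lemma encard_pos_eq_proj (S : Set α) (w : ℕ → α) {a : α} (ha : a ∈ S) :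
    {n | w n = a}.encard = {t | proj S (ofInf w) t = some a}.encard := by
  have hinj : Set.InjOn (countBelow (fun i => w i ∈ S)) {n | w n = a} := by
    intro x hx y hy hxy
    exact countBelow_uniq _ (by rw [show w x = a from hx]; exact ha)
      (by rw [show w y = a from hy]; exact ha) hxy
  have himg : (countBelow (fun i => w i ∈ S)) '' {n | w n = a}
      = {t | proj S (ofInf w) t = some a} := by
    ext t
    constructor
    · rintro ⟨j, hj, rfl⟩
      have hj' : w j = a := hj
      have := proj_ofInf_eq_some S w (j := j) (by rw [hj']; exact ha) rfl
      rw [hj'] at this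
      exact this
    · intro ht
      obtain ⟨j, hjS, hjc, hja⟩ := proj_ofInf_some_ex S w ht
      exact ⟨j, hja, hjc⟩
  rw [← himg]
  exact hinj.encard_image.symm

lemma countP_pref (S : Set α) (w : ℕ → α) (n : ℕ) :
    (pref w n).countP (dP S) = countBelow (fun i => w i ∈ S) n := by
  induction n with
  | zero => simp [countBelow_eq_card]
  | succ n ih =>
      rw [pref_succ, List.countP_append, ih, countBelow_succ]
      by_cases h : w n ∈ S
      · simp [List.countP_cons, dP_iff.2 h, h]
      · have : dP S (w n) = false := by simp [dP, h]
        simp [List.countP_cons, this, h]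

lemma filter_pref_getElem? (S : Set α) (w : ℕ → α) (n t : ℕ) (a : α) :
    ((pref w n).filter (dP S))[t]? = some a ↔
      ∃ j, j < n ∧ w j ∈ S ∧ countBelow (fun i => w i ∈ S) j = t ∧ w j = a := by
  induction n with
  | zero => simp
  | succ n ih =>
      rw [pref_succ, List.filter_append, List.getElem?_append]
      have hlen : ((pref w n).filter (dP S)).length = countBelow (fun i => w i ∈ S) n := by
        rw [← List.countP_eq_length_filter]; exact countP_pref S w n
      by_cases ht : t < ((pref w n).filter (dP S)).length
      · rw [if_pos ht, ih]
        constructor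
        · rintro ⟨j, hj, h1, h2, h3⟩; exact ⟨j, Nat.lt_succ_of_lt hj, h1, h2, h3⟩
        · rintro ⟨j, hj, h1, h2, h3⟩
          rcases Nat.lt_succ_iff_lt_or_eq.1 hj with hj' | rfl
          · exact ⟨j, hj', h1, h2, h3⟩
          · rw [hlen] at ht; omega
      · rw [if_neg ht]
        push_neg at ht
        rw [hlen] at ht
        by_cases hw : w n ∈ S
        · have : (List.filter (dP S) [w n]) = [w n] := by simp [dP_iff.2 hw]
          rw [this]
          constructor
          · intro h
            have h0 : t - ((pref w n).filter (dP S)).length = 0 := by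
              by_contra hne
              rcases Nat.exists_eq_succ_of_ne_zero hne with ⟨m, hm⟩
              rw [hm] at h; simp at h
            rw [h0] at h
            simp at h
            refine ⟨n, Nat.lt_succ_self n, hw, ?_, h⟩
            rw [hlen] at h0; omega
          · rintro ⟨j, hj, h1, h2, h3⟩
            rcases Nat.lt_succ_iff_lt_or_eq.1 hj with hj' | hje
            · exfalso
              have := countBelow_strict (fun i => w i ∈ S) hj' h1
              omega
            · subst hje
              have : t = countBelow (fun i => w i ∈ S) j := h2.symm
              rw [hlen, ← this]
              simp [h3]
              
        · have : (List.filter (dP S) [w n]) = [] := by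
            simp [dP, hw]
          rw [this]
          simp only [List.getElem?_nil]
          constructor
          · intro h; simp at h
          · rintro ⟨j, hj, h1, h2, h3⟩
            exfalso
            rcases Nat.lt_succ_iff_lt_or_eq.1 hj with hj' | hje
            · have := countBelow_strict (fun i => w i ∈ S) hj' h1
              omega
            · rw [hje] at h1; exact hw h1

lemma prefix_of_getElem? {l₁ l₂ : List α}
    (h : ∀ (t : ℕ) (a : α), l₁[t]? = some a → l₂[t]? = some a) : l₁ <+: l₂ := by
  induction l₁ generalizing l₂ with
  | nil => exact List.nil_prefix
  | cons a l ih =>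
      have h0 : l₂[0]? = some a := h 0 a (by simp)
      cases l₂ with
      | nil => simp at h0
      | cons b l₂ =>
          simp at h0
          subst h0
          have : l <+: l₂ := ih fun t x ht => by
            have := h (t + 1) x (by simpa using ht)
            simpa using this
          exact List.cons_prefix_cons.2 ⟨rfl, this⟩

lemma eventually_filter_prefix (S : Set α) {u v : ℕ → α}
    (h : proj S (ofInf u) = proj S (ofInf v)) (d : ℕ) :
    ∃ N, ∀ n, N ≤ n → ((pref v d).filter (dP S)) <+: ((pref u n).filter (dP S)) := by
  set L := (pref v d).filter (dP S) with hL
  have key : ∀ t a, L[t]? = some a →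
      ∃ j, u j ∈ S ∧ countBelow (fun i => u i ∈ S) j = t ∧ u j = a := by
    intro t a hta
    obtain ⟨j, hj, hjS, hjc, hja⟩ := (filter_pref_getElem? S v d t a).1 hta
    have hv : proj S (ofInf v) t = some a := by
      have := proj_ofInf_eq_some S v hjS hjc
      rwa [hja] at this
    have hu : proj S (ofInf u) t = some a := by rw [h]; exact hv
    exact proj_ofInf_some_ex S u hu
  have h' : ∀ t, ∃ j, ∀ a, L[t]? = some a →
      u j ∈ S ∧ countBelow (fun i => u i ∈ S) j = t ∧ u j = a := by
    intro t
    by_cases htl : t < L.length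
    · obtain ⟨a, ha⟩ : ∃ a, L[t]? = some a := ⟨L[t], by simp [htl]⟩
      obtain ⟨j, h1, h2, h3⟩ := key t a ha
      exact ⟨j, fun a' ha' => by rw [ha] at ha'; cases ha'; exact ⟨h1, h2, h3⟩⟩
    · exact ⟨0, fun a ha => absurd ha (by simp [List.getElem?_eq_none (le_of_not_gt htl)])⟩
  choose J hJ using h'
  refine ⟨(Finset.range L.length).sup J + 1, fun n hn => ?_⟩
  apply prefix_of_getElem?
  intro t a hta
  have htl : t < L.length := by
    rcases List.getElem?_eq_some_iff.1 hta with ⟨h1, _⟩; exact h1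
  obtain ⟨h1, h2, h3⟩ := hJ t a hta
  have hJt : J t < n := by
    have : J t ≤ (Finset.range L.length).sup J :=
      Finset.le_sup (Finset.mem_range.2 htl)
    omega
  exact (filter_pref_getElem? S u n t a).2 ⟨J t, hJt, h1, h2, h3⟩


end AuxDev

section GameAux
variable {α P Q : Type} {k : ℕ}

lemma foldl_pop (σ : Fin k → Set α) (d : List (α × Q)) (bufs : Fin k → List α) (i : Fin k) :
    (d.foldl (fun bs m => pop σ bs m.1) bufs) i
      = (bufs i).drop ((d.map Prod.fst).countP (dP (σ i))) := by
  induction d generalizing bufs with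
  | nil => simp
  | cons m d ih =>
      rw [List.foldl_cons, ih]
      simp only [List.map_cons, List.countP_cons]
      by_cases h : m.1 ∈ σ i
      · have hp : (pop σ bufs m.1) i = (bufs i).tail := by simp [pop, h]
        have hd : dP (σ i) m.1 = true := dP_iff.2 h
        rw [hp, hd, if_pos rfl, ← List.drop_one, List.drop_drop]
        congr 1
        omega
      · have hp : (pop σ bufs m.1) i = bufs i := by simp [pop, h]
        have hd : dP (σ i) m.1 = false := by simp [dP, h]
        rw [hp, hd]
        simp

lemma push_apply (σ : Fin k → Set α) (bufs : Fin k → List α) (a : α) (i : Fin k) :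
    push σ bufs a i = bufs i ++ List.filter (dP (σ i)) [a] := by
  by_cases h : a ∈ σ i
  · have hd : dP (σ i) a = true := dP_iff.2 h
    simp [push, h, hd]
  · have hd : dP (σ i) a = false := by simp [dP, h]
    simp [push, h, hd]

lemma playConf_succ_p (σ : Fin k → Set α) (θ : List (α × P) → List (α × Q))
    (c0 : Conf α P Q k) (s : ℕ → α × P) (n : ℕ) :
    (playConf σ θ c0 s (n + 1)).p = (s n).2 := rfl

lemma hist_length {β : Type} (s : ℕ → β) (n : ℕ) : (hist s n).length = n := by
  simp [hist]

lemma hist_succ {β : Type} (s : ℕ → β) (n : ℕ) : hist s (n + 1) = hist s n ++ [s n] := by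
  rw [hist, List.ofFn_succ']
  simp [hist, List.concat_eq_append]

@[simp] lemma hist_zero {β : Type} (s : ℕ → β) : hist s 0 = [] := rfl

lemma hist_dropLast {β : Type} (s : ℕ → β) (n : ℕ) :
    (hist s (n + 1)).dropLast = hist s n := by
  rw [hist_succ]
  exact List.dropLast_concat

lemma hist_getElem {β : Type} (s : ℕ → β) {m n : ℕ} (h : m < (hist s n).length) :
    (hist s n)[m] = s m := by
  simp [hist]

lemma hist_prefix {β : Type} (s : ℕ → β) {m n : ℕ} (h : m ≤ n) :
    hist s m <+: hist s n := by
  obtain ⟨t, rfl⟩ := Nat.exists_eq_add_of_le h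
  clear h
  induction t with
  | zero => exact List.prefix_refl _
  | succ t ih =>
      rw [show m + (t + 1) = (m + t) + 1 from rfl, hist_succ]
      exact ih.trans (List.prefix_append _ _)

lemma hist_map_fst (s : ℕ → α × P) (n : ℕ) :
    (hist s n).map Prod.fst = pref (fun m => (s m).1) n := by
  induction n with
  | zero => rfl
  | succ n ih =>
      rw [hist_succ, pref_succ, List.map_append, ih]
      rfl

lemma legal_block (σ : Fin k → Set α) (δB : Q → α → Set Q) (wd : ℕ → α) (ru : ℕ → Q)
    (hrun : ∀ j, ru (j + 1) ∈ δB (ru j) (wd j)) :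
    ∀ (len t : ℕ) (p : P) (bufs : Fin k → List α),
      (∀ i, ((List.range' t len).map wd).filter (dP (σ i)) <+: bufs i) →
      DupLegal σ δB ⟨p, bufs, ru t⟩ ((List.range' t len).map (fun j => (wd j, ru (j + 1)))) := by
  intro len
  induction len with
  | zero => intro t p bufs _; simp [DupLegal]
  | succ len ih =>
      intro t p bufs h
      rw [List.range'_succ, List.map_cons]
      refine ⟨hrun t, ?_, ?_⟩
      · intro i hi
        have h' := h i
        rw [List.range'_succ, List.map_cons, List.filter_cons, if_pos (dP_iff.2 hi)] at h'
        obtain ⟨r, hr⟩ := h'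
        show (bufs i).head? = some (wd t)
        rw [← hr]
        rfl
      · show DupLegal σ δB ⟨p, pop σ bufs (wd t), ru (t + 1)⟩ _
        apply ih (t + 1)
        intro i
        have h' := h i
        rw [List.range'_succ, List.map_cons, List.filter_cons] at h'
        by_cases hi : wd t ∈ σ i
        · rw [if_pos (dP_iff.2 hi)] at h'
          obtain ⟨r, hr⟩ := h'
          have hb : bufs i = wd t :: (((List.range' (t + 1) len).map wd).filter (dP (σ i)) ++ r) := by
            rw [← hr]; rfl
          have : (pop σ bufs (wd t)) i = ((List.range' (t + 1) len).map wd).filter (dP (σ i)) ++ r := by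
            simp [pop, hi, hb]
          rw [this]
          exact ⟨r, rfl⟩
        · have hd : dP (σ i) (wd t) = false := by simp [dP, hi]
          rw [hd] at h'
          simp only [if_neg Bool.false_ne_true] at h'
          have : (pop σ bufs (wd t)) i = bufs i := by simp [pop, hi]
          rw [this]
          exact h'

end GameAux


section Strategy
variable {α : Type} {k : ℕ}

/-- The set of accepting runs of `A` compatible with the Spoiler history `h`. -/
def Ext {A : NBA α} (h : List (α × A.Q)) : Set (ARun A) :=
  {ρ | ∀ m, ∀ hm : m < h.length, ρ.val.2 m = (h[m]'hm).1 ∧ ρ.val.1 (m + 1) = (h[m]'hm).2}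

lemma Ext_antitone {A : NBA α} {h h' : List (α × A.Q)} (hp : h <+: h') :
    Ext h' ⊆ Ext h := by
  intro ρ hρ m hm
  have hm' : m < h'.length := lt_of_lt_of_le hm hp.length_le
  have hg : h[m]'hm = h'[m]'hm' := hp.getElem hm
  rw [hg]
  exact hρ m hm'

/-- The `j`-th move of the run `f ρ`. -/
def mvf {A B : NBA α} (f : ARun A → ARun B) (ρ : ARun A) (j : ℕ) : α × B.Q :=
  ((f ρ).val.2 j, (f ρ).val.1 (j + 1))

/-- The first `d` letters of the word of `f ρ`. -/
def vPref {A B : NBA α} (f : ARun A → ARun B) (ρ : ARun A) (d : ℕ) : List α :=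
  pref (fun j => (f ρ).val.2 j) d

/-- The first `d` moves of the `f`-image are determined by the history `h` and
their letters are available in the buffers. -/
def GoodD (σ : Fin k → Set α) {A B : NBA α} (f : ARun A → ARun B)
    (h : List (α × A.Q)) (d : ℕ) : Prop :=
  (∀ ρ ∈ Ext h, ∀ ρ' ∈ Ext h, ∀ j < d, mvf f ρ j = mvf f ρ' j) ∧
  (∀ ρ ∈ Ext h, ∀ i, (vPref f ρ d).filter (dP (σ i)) <+:
      ((h.map Prod.fst).filter (dP (σ i))))

lemma GoodD_zero (σ : Fin k → Set α) {A B : NBA α} (f : ARun A → ARun B)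
    (h : List (α × A.Q)) : GoodD σ f h 0 := by
  constructor
  · intro ρ _ ρ' _ j hj; omega
  · intro ρ _ i
    simp [vPref]

lemma GoodD_mono_list (σ : Fin k → Set α) {A B : NBA α} {f : ARun A → ARun B}
    {h h' : List (α × A.Q)} (hp : h <+: h') {d : ℕ} (hg : GoodD σ f h d) :
    GoodD σ f h' d := by
  constructor
  · intro ρ hρ ρ' hρ' j hj
    exact hg.1 ρ (Ext_antitone hp hρ) ρ' (Ext_antitone hp hρ') j hj
  · intro ρ hρ i
    exact (hg.2 ρ (Ext_antitone hp hρ) i).trans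
      (List.IsPrefix.filter _ (hp.map Prod.fst))

lemma GoodD_mono_d (σ : Fin k → Set α) {A B : NBA α} {f : ARun A → ARun B}
    {h : List (α × A.Q)} {d d' : ℕ} (hd : d' ≤ d) (hg : GoodD σ f h d) :
    GoodD σ f h d' := by
  constructor
  · intro ρ hρ ρ' hρ' j hj
    exact hg.1 ρ hρ ρ' hρ' j (lt_of_lt_of_le hj hd)
  · intro ρ hρ i
    exact (List.IsPrefix.filter _ (pref_prefix _ hd)).trans (hg.2 ρ hρ i)

/-- Candidate output length at history `h`. -/
def cand (σ : Fin k → Set α) {A B : NBA α} (f : ARun A → ARun B)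
    (h : List (α × A.Q)) : ℕ :=
  if (Ext h).Nonempty then Nat.findGreatest (GoodD σ f h) h.length else 0

/-- Helper for `doneF`, on reversed histories. -/
def doneRev (σ : Fin k → Set α) {A B : NBA α} (f : ARun A → ARun B) :
    List (α × A.Q) → ℕ
  | [] => 0
  | m :: t => max (doneRev σ f t) (cand σ f ((m :: t).reverse))

/-- The total number of moves Duplicator has output after Spoiler history `h`. -/
def doneF (σ : Fin k → Set α) {A B : NBA α} (f : ARun A → ARun B)
    (h : List (α × A.Q)) : ℕ := doneRev σ f h.reverse

@[simp] lemma doneF_nil (σ : Fin k → Set α) {A B : NBA α} (f : ARun A → ARun B) :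
    doneF σ f ([] : List (α × A.Q)) = 0 := rfl

lemma doneF_concat (σ : Fin k → Set α) {A B : NBA α} (f : ARun A → ARun B)
    (h : List (α × A.Q)) (m : α × A.Q) :
    doneF σ f (h ++ [m]) = max (doneF σ f h) (cand σ f (h ++ [m])) := by
  unfold doneF
  rw [List.reverse_append]
  show doneRev σ f (m :: h.reverse) = _
  rw [doneRev]
  congr 2
  · rw [List.reverse_cons, List.reverse_reverse]

lemma good_doneF (σ : Fin k → Set α) {A B : NBA α} (f : ARun A → ARun B)
    (h : List (α × A.Q)) : GoodD σ f h (doneF σ f h) := by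
  suffices H : ∀ l : List (α × A.Q), GoodD σ f l.reverse (doneRev σ f l) by
    have := H h.reverse
    rwa [List.reverse_reverse] at this
  intro l
  induction l with
  | nil => exact GoodD_zero σ f []
  | cons m t ih =>
      rw [doneRev]
      rcases max_choice (doneRev σ f t) (cand σ f ((m :: t).reverse)) with hmax | hmax <;>
        rw [hmax]
      · refine GoodD_mono_list σ ?_ ih
        rw [List.reverse_cons]
        exact List.prefix_append _ _
      · unfold cand
        by_cases hne : (Ext ((m :: t).reverse)).Nonempty
        · rw [if_pos hne]
          exact Nat.findGreatest_spec (Nat.zero_le _) (GoodD_zero σ f _)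
        · rw [if_neg hne]
          exact GoodD_zero σ f _

/-- Duplicator's strategy: output all newly determined and available moves. -/
def outBlock (σ : Fin k → Set α) {A B : NBA α} (f : ARun A → ARun B)
    (h : List (α × A.Q)) : List (α × B.Q) :=
  if hne : (Ext h).Nonempty then
    (List.range' (doneF σ f h.dropLast) (doneF σ f h - doneF σ f h.dropLast)).map
      (mvf f hne.some)
  else []

lemma prefix_drop_of_append_prefix {β : Type} {x y L : List β} (h : x ++ y <+: L) :
    y <+: L.drop x.length := by
  obtain ⟨r, hr⟩ := h
  rw [← hr, List.append_assoc, List.drop_left]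
  exact ⟨r, rfl⟩

end Strategy


/-- **Lemma.** If there exists a continuous trace-preserving function
`f : ARun(A) → ARun(B)`, then `A ⊑^{κ_ω}_σ B` (Duplicator wins the multi-buffer
game with all buffers unbounded). -/
theorem simu_of_exists_continuous_tracePres {α : Type} [Fintype α] {k : ℕ}
    (σ : Fin k → Set α) (hcov : ∀ a : α, ∃ i, a ∈ σ i) (A B : NBA α)
    (f : ARun A → ARun B) (hf : ContinuousRF f) (htp : TracePres σ f) :
    Simu σ (kapAllOmega k) A B := by
  classical
  unfold Simu DupWinsFrom
  refine ⟨fun h => outBlock σ f h, fun s => ?_⟩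
  set c0 : Conf α A.Q B.Q k := ⟨A.init, fun _ => [], B.init⟩ with hc0
  set θ : List (α × A.Q) → List (α × B.Q) := fun h => outBlock σ f h with hθ
  set u : ℕ → α := fun n => (s n).1 with hu
  set Dn : ℕ → ℕ := fun n => doneF σ f (hist s n) with hDn
  set W : ℕ → List (α × B.Q) := fun n => ((List.range n).map (fun m => resp θ s m)).flatten
    with hW
  have hresp : ∀ n, resp θ s n = outBlock σ f (hist s (n + 1)) := fun n => rfl
  have hW0 : W 0 = [] := by simp [hW]
  have hWsucc : ∀ n, W (n + 1) = W n ++ resp θ s n := by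
    intro n
    simp [hW, List.range_succ]
  have hDmono : ∀ n, Dn n ≤ Dn (n + 1) := by
    intro n
    simp only [hDn]
    rw [hist_succ, doneF_concat]
    exact le_max_left _ _
  have hprefhist : ∀ n, hist s n <+: hist s (n + 1) := by
    intro n; rw [hist_succ]; exact List.prefix_append _ _
  have hmapfst : ∀ n, (hist s n).map Prod.fst = pref u n := fun n => hist_map_fst s n
  have hrespNe : ∀ n (hne : (Ext (hist s (n + 1))).Nonempty),
      resp θ s n = (List.range' (Dn n) (Dn (n + 1) - Dn n)).map (mvf f hne.some) := by
    intro n hne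
    rw [hresp n, outBlock, dif_pos hne, hist_dropLast]
  -- the main invariant of the play
  have inv : ∀ n,
      (W n).length = Dn n ∧
      (∀ ρ ∈ Ext (hist s n), W n = (List.range (Dn n)).map (mvf f ρ)) ∧
      (∀ i, ((W n).map Prod.fst).filter (dP (σ i)) <+: (pref u n).filter (dP (σ i))) ∧
      ((playConf σ θ c0 s n).bufs
        = fun i => ((pref u n).filter (dP (σ i))).drop
            (((W n).map Prod.fst).countP (dP (σ i)))) ∧
      (playConf σ θ c0 s n).q = (((W n).getLast?).map Prod.snd).getD B.init := by
    intro n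
    induction n with
    | zero =>
        refine ⟨by simp [hW0, hDn], ?_, ?_, ?_, ?_⟩
        · intro ρ _
          simp [hW0, hDn]
        · intro i
          simp [hW0]
        · funext i
          simp [hW0]
          rfl
        · simp [hW0]
          rfl
    | succ n ih =>
        obtain ⟨ih1, ih2, ih3, ih4, ih5⟩ := ih
        have hconf : playConf σ θ c0 s (n + 1)
            = dupApply σ (spApply σ (playConf σ θ c0 s n) (s n)) (resp θ s n) := rfl
        have hcW : ∀ i, ((W n).map Prod.fst).countP (dP (σ i))
            ≤ ((pref u n).filter (dP (σ i))).length := by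
          intro i
          rw [List.countP_eq_length_filter]
          exact (ih3 i).length_le
        have hpush : ∀ i, (spApply σ (playConf σ θ c0 s n) (s n)).bufs i
            = ((pref u (n + 1)).filter (dP (σ i))).drop
                (((W n).map Prod.fst).countP (dP (σ i))) := by
          intro i
          show push σ (playConf σ θ c0 s n).bufs (s n).1 i = _
          rw [push_apply, ih4, pref_succ, List.filter_append,
            List.drop_append_of_le_length (hcW i)]
        by_cases hne : (Ext (hist s (n + 1))).Nonempty
        · set ρ := hne.some with hρdef
          have hρ' : ρ ∈ Ext (hist s (n + 1)) := hne.some_mem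
          have hρ : ρ ∈ Ext (hist s n) := Ext_antitone (hprefhist n) hρ'
          have hr : resp θ s n = (List.range' (Dn n) (Dn (n + 1) - Dn n)).map (mvf f ρ) :=
            hrespNe n hne
          have hDle : Dn n ≤ Dn (n + 1) := hDmono n
          have hWn : W n = (List.range (Dn n)).map (mvf f ρ) := ih2 ρ hρ
          have hWn1 : W (n + 1) = (List.range (Dn (n + 1))).map (mvf f ρ) := by
            rw [hWsucc, hWn, hr, ← List.map_append]
            congr 1
            have hap := List.range'_append (s := 0) (m := Dn n) (n := Dn (n + 1) - Dn n) (step := 1)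
            rw [show 0 + 1 * Dn n = Dn n by omega,
              show Dn n + (Dn (n + 1) - Dn n) = Dn (n + 1) by omega] at hap
            rw [List.range_eq_range', List.range_eq_range', hap]
          have hgood := good_doneF σ f (hist s (n + 1))
          have hWany : ∀ ρ'' ∈ Ext (hist s (n + 1)),
              W (n + 1) = (List.range (Dn (n + 1))).map (mvf f ρ'') := by
            intro ρ'' hρ''
            rw [hWn1]
            apply List.map_congr_left
            intro j hj
            exact hgood.1 ρ hρ' ρ'' hρ'' j (List.mem_range.1 hj)
          have hWfst : (W (n + 1)).map Prod.fst = vPref f ρ (Dn (n + 1)) := by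
            rw [hWn1, List.map_map]
            rfl
          refine ⟨by rw [hWn1]; simp, hWany, ?_, ?_, ?_⟩
          · intro i
            rw [hWfst, ← hmapfst (n + 1)]
            exact hgood.2 ρ hρ' i
          · funext i
            rw [hconf]
            show (resp θ s n).foldl (fun bs m => pop σ bs m.1)
              ((spApply σ (playConf σ θ c0 s n) (s n)).bufs) i = _
            rw [foldl_pop, hpush i, List.drop_drop]
            congr 1
            rw [hWsucc, List.map_append, List.countP_append]
          · rw [hconf]
            show (((resp θ s n).getLast?).map Prod.snd).getD
              ((playConf σ θ c0 s n).q) = _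
            by_cases hDeq : Dn (n + 1) = Dn n
            · have hre : resp θ s n = [] := by
                rw [hr, hDeq]
                simp
              rw [hre]
              simp only [List.getLast?_nil, Option.map_none, Option.getD_none]
              rw [ih5, hWsucc, hre, List.append_nil]
            · have hlt : Dn n < Dn (n + 1) := lt_of_le_of_ne hDle (Ne.symm hDeq)
              have hrange : List.range' (Dn n) (Dn (n + 1) - Dn n)
                  = List.range' (Dn n) (Dn (n + 1) - Dn n - 1) ++ [Dn (n + 1) - 1] := by
                have hc := List.range'_concat (s := Dn n) (n := Dn (n + 1) - Dn n - 1) (step := 1)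
                rw [show Dn n + 1 * (Dn (n + 1) - Dn n - 1) = Dn (n + 1) - 1 by omega] at hc
                rw [show Dn (n + 1) - Dn n - 1 + 1 = Dn (n + 1) - Dn n by omega] at hc
                exact hc
              have hrangeW : List.range (Dn (n + 1))
                  = List.range (Dn (n + 1) - 1) ++ [Dn (n + 1) - 1] := by
                rw [← List.range_succ]
                congr 1
                omega
              rw [hr, hrange, hWn1, hrangeW]
              simp only [List.map_append, List.map_cons, List.map_nil,
                List.getLast?_concat, Option.map_some, Option.getD_some]
        · have hre : resp θ s n = [] := by
            rw [hresp n, outBlock, dif_neg hne]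
          have hDeq : Dn (n + 1) = Dn n := by
            simp only [hDn]
            rw [hist_succ, doneF_concat]
            have hcz : cand σ f (hist s n ++ [s n]) = 0 := by
              rw [cand, if_neg]
              rw [← hist_succ]
              exact hne
            rw [hcz]
            exact max_eq_left (Nat.zero_le _)
          have hWeq : W (n + 1) = W n := by rw [hWsucc, hre, List.append_nil]
          refine ⟨by rw [hWeq, hDeq]; exact ih1, ?_, ?_, ?_, ?_⟩
          · intro ρ hρ
            exact absurd ⟨ρ, hρ⟩ hne
          · intro i
            rw [hWeq]
            exact (ih3 i).trans (List.IsPrefix.filter _ (pref_prefix u (Nat.le_succ n)))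
          · funext i
            rw [hconf]
            show (resp θ s n).foldl (fun bs m => pop σ bs m.1)
              ((spApply σ (playConf σ θ c0 s n) (s n)).bufs) i = _
            rw [hre, List.foldl_nil, hpush i, hWeq]
          · rw [hconf]
            show (((resp θ s n).getLast?).map Prod.snd).getD
              ((playConf σ θ c0 s n).q) = _
            rw [hre, hWeq]
            simp only [List.getLast?_nil, Option.map_none, Option.getD_none]
            exact ih5
  -- q-component after n rounds, relative to any compatible accepting run
  have hqchar : ∀ n (ρ : ARun A), ρ ∈ Ext (hist s n) →
      (playConf σ θ c0 s n).q = (f ρ).val.1 (Dn n) := by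
    intro n ρ hρ
    obtain ⟨_, inv2, _, _, inv5⟩ := inv n
    rw [inv5, inv2 ρ hρ]
    by_cases hD : Dn n = 0
    · rw [hD]
      simp only [List.range_zero, List.map_nil, List.getLast?_nil, Option.map_none,
        Option.getD_none]
      exact ((f ρ).2.1).symm
    · have hrangeW : List.range (Dn n) = List.range (Dn n - 1) ++ [Dn n - 1] := by
        rw [← List.range_succ]
        congr 1
        omega
      rw [hrangeW]
      simp only [List.map_append, List.map_cons, List.map_nil, List.getLast?_concat,
        Option.map_some, Option.getD_some]
      show (f ρ).val.1 (Dn n - 1 + 1) = _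
      rw [show Dn n - 1 + 1 = Dn n by omega]
  -- pushed buffers after Spoiler's move in round n
  have hpushO : ∀ n i, (spApply σ (playConf σ θ c0 s n) (s n)).bufs i
      = ((pref u (n + 1)).filter (dP (σ i))).drop
          (((W n).map Prod.fst).countP (dP (σ i))) := by
    intro n i
    obtain ⟨_, _, inv3, inv4, _⟩ := inv n
    show push σ (playConf σ θ c0 s n).bufs (s n).1 i = _
    rw [push_apply, inv4, pref_succ, List.filter_append,
      List.drop_append_of_le_length
        (by rw [List.countP_eq_length_filter]; exact (inv3 i).length_le)]
  refine ⟨?_, ?_⟩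
  · -- Duplicator always has a legal move, and capacities are respected
    intro n _
    have hcap : CapOk (kapAllOmega k) (playConf σ θ c0 s (n + 1)) := fun i => le_top
    have hleg : DupLegal σ B.δ (spApply σ (playConf σ θ c0 s n) (s n)) (resp θ s n) := by
      by_cases hne : (Ext (hist s (n + 1))).Nonempty
      · set ρ := hne.some with hρdef
        have hρ' : ρ ∈ Ext (hist s (n + 1)) := hne.some_mem
        have hρ : ρ ∈ Ext (hist s n) := Ext_antitone (hprefhist n) hρ'
        obtain ⟨inv1, inv2, inv3, inv4, inv5⟩ := inv n
        have hgood := good_doneF σ f (hist s (n + 1))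
        have hDle : Dn n ≤ Dn (n + 1) := hDmono n
        have hWfst : (W n).map Prod.fst = vPref f ρ (Dn n) := by
          rw [inv2 ρ hρ, List.map_map]
          rfl
        have hkey : DupLegal σ B.δ
            ⟨(s n).2, push σ (playConf σ θ c0 s n).bufs (s n).1, (f ρ).val.1 (Dn n)⟩
            ((List.range' (Dn n) (Dn (n + 1) - Dn n)).map
              (fun j => ((f ρ).val.2 j, (f ρ).val.1 (j + 1)))) := by
          apply legal_block σ B.δ _ _ (f ρ).2.2.1
          intro i
          have hsplit : vPref f ρ (Dn (n + 1))
              = vPref f ρ (Dn n) ++ (List.range' (Dn n) (Dn (n + 1) - Dn n)).map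
                  (fun j => (f ρ).val.2 j) := by
            unfold vPref pref
            rw [← List.map_append]
            congr 1
            have hap := List.range'_append (s := 0) (m := Dn n) (n := Dn (n + 1) - Dn n) (step := 1)
            rw [show 0 + 1 * Dn n = Dn n by omega,
              show Dn n + (Dn (n + 1) - Dn n) = Dn (n + 1) by omega] at hap
            rw [List.range_eq_range', List.range_eq_range', hap]
          have hpref := hgood.2 ρ hρ' i
          rw [hmapfst (n + 1), hsplit, List.filter_append] at hpref
          have hdrop := prefix_drop_of_append_prefix hpref
          have := hpushO n i
          rw [show push σ (playConf σ θ c0 s n).bufs (s n).1 i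
              = (spApply σ (playConf σ θ c0 s n) (s n)).bufs i from rfl, this,
            hWfst, List.countP_eq_length_filter]
          exact hdrop
        have hcfg : spApply σ (playConf σ θ c0 s n) (s n)
            = ⟨(s n).2, push σ (playConf σ θ c0 s n).bufs (s n).1, (f ρ).val.1 (Dn n)⟩ := by
          show (⟨(s n).2, push σ (playConf σ θ c0 s n).bufs (s n).1,
            (playConf σ θ c0 s n).q⟩ : Conf α A.Q B.Q k) = _
          rw [hqchar n ρ hρ]
        rw [hrespNe n hne, hcfg]
        exact hkey
      · rw [hresp n, outBlock, dif_neg hne]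
        exact trivial
    exact ⟨hleg, hcap⟩
  · -- the winning condition
    intro hL hAcc
    set r : ℕ → A.Q := fun n => Nat.rec (motive := fun _ => A.Q) A.init (fun m _ => (s m).2) n
      with hrdef
    have hr0 : r 0 = A.init := rfl
    have hrs : ∀ n, r (n + 1) = (s n).2 := fun n => rfl
    have hpp : ∀ n, (playConf σ θ c0 s n).p = r n := by
      intro n
      cases n with
      | zero => rfl
      | succ n => rfl
    have htrans : ∀ n, r (n + 1) ∈ A.δ (r n) (u n) := by
      intro n
      have hl := hL n
      unfold SpLegalAt SpLegal at hl
      rw [hpp n] at hl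
      exact hl
    have hrinf : {n | r n ∈ A.F}.Infinite := by
      have hsub : (fun n => n + 1) '' {n | (s n).2 ∈ A.F} ⊆ {n | r n ∈ A.F} := by
        rintro _ ⟨m, hm, rfl⟩
        exact hm
      exact Set.Infinite.mono hsub
        (Set.Infinite.image (Set.injOn_of_injective (fun a b h => by omega)) hAcc)
    set ρs : ARun A := ⟨(r, u), hr0, htrans, hrinf⟩ with hρsdef
    have hExts : ∀ n, ρs ∈ Ext (hist s n) := by
      intro n m hm
      refine ⟨?_, ?_⟩
      · show u m = _
        rw [hist_getElem]
      · show r (m + 1) = _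
        rw [hrs, hist_getElem]
    have hdet : ∀ d : ℕ, ∃ N, ∀ n, N ≤ n → ∀ ρ' ∈ Ext (hist s n), ∀ j < d,
        mvf f ρ' j = mvf f ρs j := by
      intro d
      obtain ⟨m, hm⟩ := hf ρs (2 * d + 1)
      refine ⟨m, fun n hn ρ' hρ' j hj => ?_⟩
      have hagree : ∀ t, t < m → seqOf ρ' t = seqOf ρs t := by
        intro t ht
        have htn : t < n := lt_of_lt_of_le ht hn
        unfold seqOf
        by_cases hpar : t % 2 = 0
        · rw [if_pos hpar, if_pos hpar]
          congr 1
          rcases Nat.eq_zero_or_pos (t / 2) with hq | hq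
          · rw [hq, ρ'.2.1]
            exact hr0.symm
          · obtain ⟨q, hqe⟩ : ∃ q, t / 2 = q + 1 := ⟨t / 2 - 1, by omega⟩
            rw [hqe]
            have hqn : q < (hist s n).length := by rw [hist_length]; omega
            have hg := (hρ' q hqn).2
            rw [hg, hist_getElem]
        · rw [if_neg hpar, if_neg hpar]
          congr 1
          have hqn : t / 2 < (hist s n).length := by rw [hist_length]; omega
          have hg := (hρ' (t / 2) hqn).1
          rw [hg, hist_getElem]
      have hfagree := hm ρ' hagree
      have h1 := hfagree (2 * j + 1) (by omega)
      have h2 := hfagree (2 * j + 2) (by omega)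
      unfold seqOf at h1 h2
      rw [if_neg (by omega), if_neg (by omega)] at h1
      rw [if_pos (by omega), if_pos (by omega)] at h2
      rw [show (2 * j + 1) / 2 = j by omega] at h1
      rw [show (2 * j + 2) / 2 = j + 1 by omega] at h2
      have e1 : (f ρ').val.2 j = (f ρs).val.2 j := by simpa using h1
      have e2 : (f ρ').val.1 (j + 1) = (f ρs).val.1 (j + 1) := by simpa using h2
      unfold mvf
      rw [e1, e2]
    have hvw : TraceEquiv σ (ofInf u) (ofInf ((f ρs).val.2)) := htp ρs
    have hpc : ∀ d : ℕ, ∃ N, ∀ n, N ≤ n → ∀ i,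
        (vPref f ρs d).filter (dP (σ i)) <+: (pref u n).filter (dP (σ i)) := by
      intro d
      have hch : ∀ i : Fin k, ∃ N, ∀ n, N ≤ n →
          (vPref f ρs d).filter (dP (σ i)) <+: (pref u n).filter (dP (σ i)) :=
        fun i => eventually_filter_prefix (σ i) (hvw i) d
      choose N hN using hch
      exact ⟨Finset.univ.sup N, fun n hn i =>
        hN i n (le_trans (Finset.le_sup (Finset.mem_univ i)) hn)⟩
    have hDinf : ∀ d : ℕ, ∃ n, d ≤ Dn n := by
      intro d
      obtain ⟨N₁, hN₁⟩ := hdet d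
      obtain ⟨N₂, hN₂⟩ := hpc d
      refine ⟨max (max N₁ N₂) d + 1, ?_⟩
      have hGood : GoodD σ f (hist s (max (max N₁ N₂) d + 1)) d := by
        constructor
        · intro ρ1 h1 ρ2 h2 j hj
          rw [hN₁ _ (by omega) ρ1 h1 j hj, hN₁ _ (by omega) ρ2 h2 j hj]
        · intro ρ1 h1 i
          have hveq : vPref f ρ1 d = vPref f ρs d := by
            unfold vPref pref
            apply List.map_congr_left
            intro j hj
            exact congrArg Prod.fst (hN₁ _ (by omega) ρ1 h1 j (List.mem_range.1 hj))
          rw [hveq, hmapfst]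
          exact hN₂ _ (by omega) i
      have hcand : d ≤ cand σ f (hist s (max (max N₁ N₂) d + 1)) := by
        rw [cand, if_pos ⟨ρs, hExts _⟩]
        exact Nat.le_findGreatest (by rw [hist_length]; omega) hGood
      refine le_trans hcand ?_
      show cand σ f _ ≤ doneF σ f (hist s (max (max N₁ N₂) d + 1))
      rw [hist_succ, doneF_concat, ← hist_succ]
      exact le_max_right _ _
    have hDmono' : ∀ m n, m ≤ n → Dn m ≤ Dn n := by
      intro m n h
      induction n with
      | zero =>
          have : m = 0 := by omega
          rw [this]
      | succ n ihn =>
          by_cases h' : m ≤ n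
          · exact le_trans (ihn h') (hDmono n)
          · have hmn : m = n + 1 := by omega
            rw [hmn]
    have hfind : ∀ d : ℕ, ∃ n, Dn n ≤ d ∧ d < Dn (n + 1) := by
      intro d
      have hex : ∃ n, d < Dn n := by
        obtain ⟨n, hn⟩ := hDinf (d + 1)
        exact ⟨n, by omega⟩
      have hD0 : Dn 0 = 0 := rfl
      have hn₀pos : Nat.find hex ≠ 0 := by
        intro h0
        have hsp := Nat.find_spec hex
        rw [h0] at hsp
        omega
      refine ⟨Nat.find hex - 1, ?_, ?_⟩
      · have := Nat.find_min hex (m := Nat.find hex - 1) (by omega)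
        omega
      · have hsp := Nat.find_spec hex
        rw [show Nat.find hex - 1 + 1 = Nat.find hex by omega]
        exact hsp
    have hrespC : ∀ n, resp θ s n
        = (List.range' (Dn n) (Dn (n + 1) - Dn n)).map (mvf f ρs) := by
      intro n
      have hne : (Ext (hist s (n + 1))).Nonempty := ⟨ρs, hExts (n + 1)⟩
      rw [hrespNe n hne]
      apply List.map_congr_left
      intro j hj
      have hjm := List.mem_range'_1.1 hj
      have hDle := hDmono n
      exact (good_doneF σ f (hist s (n + 1))).1 hne.some hne.some_mem ρs (hExts (n + 1)) j
        (by show j < Dn (n + 1); omega)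
    constructor
    · -- Duplicator's run is infinite and accepting
      show {n | ∃ m ∈ resp θ s n, m.2 ∈ B.F}.Infinite
      have hBinf : {t | (f ρs).val.1 t ∈ B.F}.Infinite := (f ρs).2.2.2
      by_contra hfin
      rw [Set.not_infinite] at hfin
      obtain ⟨n₀, hn₀⟩ := hfin.bddAbove
      obtain ⟨t, ht, htgt⟩ := hBinf.exists_gt (Dn (n₀ + 1) + 1)
      obtain ⟨n, hn1, hn2⟩ := hfind (t - 1)
      have hmem : n ∈ {n | ∃ m ∈ resp θ s n, m.2 ∈ B.F} := by
        refine ⟨mvf f ρs (t - 1), ?_, ?_⟩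
        · rw [hrespC n]
          apply List.mem_map_of_mem
          apply List.mem_range'_1.2
          have := hDmono n
          exact ⟨hn1, by omega⟩
        · show (f ρs).val.1 (t - 1 + 1) ∈ B.F
          rw [show t - 1 + 1 = t by omega]
          exact ht
      have hle : n ≤ n₀ := hn₀ hmem
      have : Dn (n + 1) ≤ Dn (n₀ + 1) := hDmono' _ _ (by omega)
      omega
    · -- equal numbers of occurrences
      intro a
      obtain ⟨i, hai⟩ := hcov a
      have e1 : spOcc s a = {n | u n = a}.encard := rfl
      have e2 : {n | u n = a}.encard = {d | (f ρs).val.2 d = a}.encard := by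
        rw [encard_pos_eq_proj (σ i) u hai]
        rw [show proj (σ i) (ofInf u) = proj (σ i) (ofInf ((f ρs).val.2)) from hvw i]
        exact (encard_pos_eq_proj (σ i) ((f ρs).val.2) hai).symm
      have e3 : dupOcc θ s a
          = {x : ℕ × ℕ | x.2 < Dn (x.1 + 1) - Dn x.1
              ∧ (f ρs).val.2 (Dn x.1 + x.2) = a}.encard := by
        unfold dupOcc
        congr 1
        ext x
        simp only [Set.mem_setOf_eq]
        constructor
        · rintro ⟨m, hm1, hm2⟩
          rw [hrespC x.1, List.getElem?_map] at hm1
          by_cases hx : x.2 < Dn (x.1 + 1) - Dn x.1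
          · rw [List.getElem?_range' hx] at hm1
            simp only [Option.map_some, Option.some_inj] at hm1
            refine ⟨hx, ?_⟩
            rw [← hm2, ← hm1]
            show (f ρs).val.2 (Dn x.1 + x.2) = (mvf f ρs (Dn x.1 + 1 * x.2)).1
            rw [one_mul]
            rfl
          · exfalso
            rw [List.getElem?_eq_none (by rw [List.length_range']; omega)] at hm1
            simp at hm1
        · rintro ⟨hx, hval⟩
          refine ⟨mvf f ρs (Dn x.1 + x.2), ?_, hval⟩
          rw [hrespC x.1, List.getElem?_map, List.getElem?_range' hx]
          simp only [Option.map_some, Option.some_inj]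
          rw [one_mul]
      have e4 : {x : ℕ × ℕ | x.2 < Dn (x.1 + 1) - Dn x.1
            ∧ (f ρs).val.2 (Dn x.1 + x.2) = a}.encard
          = {d | (f ρs).val.2 d = a}.encard := by
        have hinj : Set.InjOn (fun x : ℕ × ℕ => Dn x.1 + x.2)
            {x : ℕ × ℕ | x.2 < Dn (x.1 + 1) - Dn x.1
              ∧ (f ρs).val.2 (Dn x.1 + x.2) = a} := by
          rintro ⟨n1, j1⟩ h1 ⟨n2, j2⟩ h2 heq
          simp only [Set.mem_setOf_eq] at h1 h2
          simp only at heq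
          have hmm1 := hDmono n1
          have hmm2 := hDmono n2
          rcases lt_trichotomy n1 n2 with hlt | heqn | hgt
          · exfalso
            have := hDmono' (n1 + 1) n2 (by omega)
            omega
          · subst heqn
            have : j1 = j2 := by omega
            rw [this]
          · exfalso
            have := hDmono' (n2 + 1) n1 (by omega)
            omega
        have himg : (fun x : ℕ × ℕ => Dn x.1 + x.2) ''
            {x : ℕ × ℕ | x.2 < Dn (x.1 + 1) - Dn x.1
              ∧ (f ρs).val.2 (Dn x.1 + x.2) = a}
            = {d | (f ρs).val.2 d = a} := by
          ext d
          constructor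
          · rintro ⟨⟨n1, j1⟩, hx, rfl⟩
            exact hx.2
          · intro hd
            obtain ⟨n, hn1, hn2⟩ := hfind d
            refine ⟨(n, d - Dn n), ⟨by show d - Dn n < Dn (n + 1) - Dn n; omega, ?_⟩,
              by show Dn n + (d - Dn n) = d; omega⟩
            show (f ρs).val.2 (Dn n + (d - Dn n)) = a
            rw [show Dn n + (d - Dn n) = d by omega]
            exact hd
        rw [← himg]
        exact hinj.encard_image.symm
      rw [e1, e2, e3, e4]



end MultiBuffer
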